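/- The function g(x) = (x+1)·ln(1 + 1/x) / √(2x+1) is strictly monotonically decreasing on (0, ∞). -/

import Mathlib

lemma stmt_0_deriv (x : ℝ) (hx : 0 < x) :
    HasDerivAt (fun x : ℝ => (x + 1) * Real.log (1 + 1 / x) / Real.sqrt (2 * x + 1))
      ((x * Real.log (1 + 1 / x) - (2 * x + 1) / x)
        / ((2 * x + 1) * Real.sqrt (2 * x + 1))) x := by
  have hx0 : x ≠ 0 := hx.ne'
  have hu : (0 : ℝ) < 1 + 1 / x := by positivity
  have hs : (0 : ℝ) < 2 * x + 1 := by linarith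
  have hsq : Real.sqrt (2 * x + 1) ≠ 0 := (Real.sqrt_pos.mpr hs).ne'
  have h1 : HasDerivAt (fun x : ℝ => 1 + 1 / x) (-(x ^ 2)⁻¹) x := by
    simpa [one_div] using (hasDerivAt_inv hx0).const_add 1
  have h2 : HasDerivAt (fun x : ℝ => Real.log (1 + 1 / x)) (-(x ^ 2)⁻¹ / (1 + 1 / x)) x :=
    h1.log hu.ne'
  have h3 : HasDerivAt (fun x : ℝ => x + 1) 1 x := (hasDerivAt_id x).add_const 1
  have h4 : HasDerivAt (fun x : ℝ => (x + 1) * Real.log (1 + 1 / x))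
      (1 * Real.log (1 + 1 / x) + (x + 1) * (-(x ^ 2)⁻¹ / (1 + 1 / x))) x := h3.mul h2
  have h5 : HasDerivAt (fun x : ℝ => 2 * x + 1) 2 x := by
    simpa using ((hasDerivAt_id x).const_mul 2).add_const 1
  have h6 : HasDerivAt (fun x : ℝ => Real.sqrt (2 * x + 1))
      (1 / (2 * Real.sqrt (2 * x + 1)) * 2) x :=
    (Real.hasDerivAt_sqrt hs.ne').comp x h5
  have h7 := h4.div h6 hsq
  convert h7 using 1
  case e'_4 => rfl
  case e'_5 => rfl
  case e'_8 => rfl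
  rw [Real.sq_sqrt hs.le]
  field_simp
  ring_nf
  rw [Real.sq_sqrt (by linarith), mul_inv_cancel₀ hx0]
  ring

/-- The function g(x) = (x+1)·ln(1 + 1/x) / √(2x+1) is strictly monotonically
decreasing on (0, ∞). -/
theorem stmt_0 :
    StrictAntiOn (fun x : ℝ => (x + 1) * Real.log (1 + 1 / x) / Real.sqrt (2 * x + 1))
      (Set.Ioi (0 : ℝ)) := by
  have hderiv : ∀ x ∈ Set.Ioi (0 : ℝ),
      HasDerivAt (fun x : ℝ => (x + 1) * Real.log (1 + 1 / x) / Real.sqrt (2 * x + 1))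
        ((x * Real.log (1 + 1 / x) - (2 * x + 1) / x)
          / ((2 * x + 1) * Real.sqrt (2 * x + 1))) x :=
    fun x hx => stmt_0_deriv x hx
  apply strictAntiOn_of_deriv_neg (convex_Ioi 0)
  · exact fun x hx => (hderiv x hx).continuousAt.continuousWithinAt
  · intro x hx
    rw [interior_Ioi] at hx
    have hx' : (0 : ℝ) < x := hx
    rw [(hderiv x hx).deriv]
    have hs : (0 : ℝ) < 2 * x + 1 := by linarith
    apply div_neg_of_neg_of_pos
    · have hlog : Real.log (1 + 1 / x) ≤ 1 / x := by
        have := Real.log_le_sub_one_of_pos (show (0:ℝ) < 1 + 1 / x by positivity)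
        linarith
      have h1 : x * Real.log (1 + 1 / x) ≤ x * (1 / x) :=
        mul_le_mul_of_nonneg_left hlog hx'.le
      have h2 : x * (1 / x) = 1 := by field_simp
      have h3 : (2 * x + 1) / x > 1 := by
        rw [gt_iff_lt, lt_div_iff₀ hx']; linarith
      linarith
    · exact mul_pos hs (Real.sqrt_pos.mpr hs)
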